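/- Let G be a finite group, let A be a stably finite unital C*-algebra, and let α : G → Aut(A) be an action of G on A which has the Rokhlin property. Then rc(A^α) ≤ rc(A), i.e., the radius of comparison of the fixed point algebra is at most the radius of comparison of A. -/

import Mathlib

open Filter Topology
open scoped ENNReal

namespace RC

/-- Cuntz subequivalence `a ≾ b` in an algebra: some sequence `vₙ b vₙ*` converges to `a`. -/
def CuntzSubeq {M : Type*} [Mul M] [Star M] [TopologicalSpace M] (a b : M) : Prop :=
  ∃ v : ℕ → M, Tendsto (fun n => v n * b * star (v n)) atTop (𝓝 a)

/-- Cuntz subequivalence with the implementing sequence taken in the subset `S`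
(e.g. a C*-subalgebra). -/
def CuntzSubeqIn {M : Type*} [Mul M] [Star M] [TopologicalSpace M] (S : Set M) (a b : M) :
    Prop :=
  ∃ v : ℕ → M, (∀ n, v n ∈ S) ∧ Tendsto (fun n => v n * b * star (v n)) atTop (𝓝 a)

/-- `(a - ε)₊`, the continuous functional calculus of `a` applied to `t ↦ max (t - ε) 0`,
in a unital algebra. -/
noncomputable def posCut {A : Type*} [Ring A] [StarRing A] [TopologicalSpace A] [Algebra ℝ A]
    [ContinuousFunctionalCalculus ℝ A (IsSelfAdjoint : A → Prop)] (ε : ℝ) (a : A) : A :=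
  cfc (fun t : ℝ => max (t - ε) 0) a

/-- `(a - ε)₊` in a non-unital C*-algebra, via the non-unital functional calculus. -/
noncomputable def posCutN {A : Type*} [NonUnitalCStarAlgebra A] (ε : ℝ) (a : A) : A :=
  cfcₙ (fun t : ℝ => max (t - ε) 0) a

/-- An element of the form `c* c`; in a C*-algebra this is precisely positivity.  It is used
for positivity in matrix algebras over a C*-algebra (which carry no norm in Mathlib). -/
def StarPos {M : Type*} [Mul M] [Star M] (b : M) : Prop := ∃ c : M, b = star c * c

/-- `mulPow b k = b ^ (k + 1)`, defined without a unit. -/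
def mulPow {M : Type*} [Mul M] (b : M) : ℕ → M
  | 0 => b
  | n + 1 => mulPow b n * b

/-- Conditions (i)–(iii) of the definition of a quasitrace: `τ(x*x) = τ(xx*) ≥ 0`,
additivity on selfadjoint decompositions `a + i b`, and linearity on every commutative
closed star subalgebra. -/
def IsQuasitracePre {M : Type*} [NonUnitalRing M] [StarRing M] [Module ℂ M]
    [TopologicalSpace M] (τ : M → ℂ) : Prop :=
  (∀ x : M, τ (star x * x) = τ (x * star x)) ∧
  (∀ x : M, ∃ r : ℝ, 0 ≤ r ∧ τ (star x * x) = r) ∧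
  (∀ a b : M, IsSelfAdjoint a → IsSelfAdjoint b →
      τ (a + Complex.I • b) = τ a + Complex.I * τ b) ∧
  (∀ B : NonUnitalStarSubalgebra ℂ M, IsClosed (B : Set M) →
      (∀ x ∈ B, ∀ y ∈ B, x * y = y * x) →
      (∀ x ∈ B, ∀ y ∈ B, τ (x + y) = τ x + τ y) ∧
        ∀ (c : ℂ), ∀ x ∈ B, τ (c • x) = c * τ x)

/-- A quasitrace (2-quasitrace): conditions (i)–(iii) together with condition (iv),
the existence of an extension to `M₂` satisfying (i)–(iii) with `τ x = τ₂ (x ⊗ e₁₁)`. -/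
def IsQuasitrace {M : Type*} [NonUnitalRing M] [StarRing M] [Module ℂ M]
    [TopologicalSpace M] (τ : M → ℂ) : Prop :=
  IsQuasitracePre τ ∧
    ∃ τ₂ : Matrix (Fin 2) (Fin 2) M → ℂ, IsQuasitracePre τ₂ ∧
      ∀ x : M, τ x = τ₂ (Matrix.single 0 0 x)

/-- `σ` is the canonical extension `τₙ` of the quasitrace `τ` to `Mₙ`:
it is a quasitrace with `σ (a ⊗ e_jj) = τ a` for all `a` and `j`.
By Blanchard–Handelman such an extension exists and is unique. -/
def IsMatrixExt {M : Type*} [NonUnitalRing M] [StarRing M] [Module ℂ M] [TopologicalSpace M]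
    {n : ℕ} (σ : Matrix (Fin n) (Fin n) M → ℂ) (τ : M → ℂ) : Prop :=
  IsQuasitrace σ ∧ ∀ (a : M) (j : Fin n), σ (Matrix.single j j a) = τ a

/-- `d = d_σ(a) = lim_k σ(a^{1/k})`: for every sequence `b k` of positive `(k+1)`-st roots of
`a`, `σ (b k)` converges to `d`.  (In a C*-algebra positive roots exist and are unique, so this
characterizes the usual `d_τ`.) -/
def HasDTau {N : Type*} [Mul N] [Star N] (σ : N → ℂ) (a : N) (d : ℝ) : Prop :=
  ∀ b : ℕ → N, (∀ k, StarPos (b k) ∧ mulPow (b k) k = a) →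
    Tendsto (fun k => (σ (b k)).re) atTop (𝓝 d)

/-- `r`-comparison for the algebra `M` with unit `e`: whenever `a b` are positive elements of a
matrix algebra over `M` with `d_τ(a) + r < d_τ(b)` for every normalized quasitrace `τ`
(evaluated through its canonical matrix extension), then `a ≾ b`. -/
def RComparison {M : Type*} [NonUnitalRing M] [StarRing M] [Module ℂ M] [TopologicalSpace M]
    (e : M) (r : ℝ) : Prop :=
  ∀ (m : ℕ) (a b : Matrix (Fin m) (Fin m) M), StarPos a → StarPos b →
    (∀ (τ : M → ℂ) (σ : Matrix (Fin m) (Fin m) M → ℂ) (da db : ℝ),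
        IsQuasitrace τ → τ e = 1 → IsMatrixExt σ τ →
        HasDTau σ a da → HasDTau σ b db → da + r < db) →
    CuntzSubeq a b

/-- The radius of comparison of the algebra `M` with unit `e`: the infimum (in `ℝ≥0∞`, hence
`∞` if there is none) of all `r ≥ 0` such that `M` has `r`-comparison. -/
noncomputable def radiusCmp {M : Type*} [NonUnitalRing M] [StarRing M] [Module ℂ M]
    [TopologicalSpace M] (e : M) : ℝ≥0∞ :=
  sInf {x : ℝ≥0∞ | ∃ r : ℝ, 0 ≤ r ∧ x = ENNReal.ofReal r ∧ RComparison e r}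

/-- Stable finiteness: for every `n`, no projection in `Mₙ(A)` is Murray–von Neumann
equivalent to a proper subprojection of itself. -/
def StablyFinite (A : Type*) [Ring A] [StarRing A] : Prop :=
  ∀ (n : ℕ) (p q v : Matrix (Fin n) (Fin n) A),
    p * p = p → star p = p → q * q = q → star q = q →
    p * q = q → q ≠ p → star v * v = p → v * star v = q → False

/-- Simplicity of a C*-algebra: the only closed two-sided ideals are `0` and everything. -/
def CStarSimple (A : Type*) [NonUnitalNonAssocRing A] [TopologicalSpace A] : Prop :=
  ∀ I : TwoSidedIdeal A, IsClosed (I : Set A) →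
    (I : Set A) = {0} ∨ (I : Set A) = Set.univ

/-- `p` is full: every closed two-sided ideal containing `p` is everything, i.e. the closed
two-sided ideal generated by `p` is the whole algebra. -/
def IsFullIn {A : Type*} [NonUnitalNonAssocRing A] [TopologicalSpace A] (p : A) : Prop :=
  ∀ I : TwoSidedIdeal A, IsClosed (I : Set A) → p ∈ I → (I : Set A) = Set.univ

/-- The corner `p B p = {x | p x p = x}` of an algebra `B` by a projection `p`,
as a (non-unital) star subalgebra of `B`; its unit is `p`. -/
def cornerAlg {B : Type*} [NonUnitalRing B] [Module ℂ B] [SMulCommClass ℂ B B]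
    [IsScalarTower ℂ B B] [StarRing B] (p : B) (hp1 : p * p = p) (hp2 : star p = p) :
    NonUnitalStarSubalgebra ℂ B where
  carrier := {x | p * x * p = x}
  add_mem' := by
    intro x y hx hy
    simp only [Set.mem_setOf_eq] at *
    rw [mul_add, add_mul, hx, hy]
  zero_mem' := by simp
  mul_mem' := by
    intro x y hx hy
    simp only [Set.mem_setOf_eq] at *
    have hpp : ∀ z : B, p * (p * z) = p * z := fun z => by rw [← mul_assoc, hp1]
    conv_lhs => rw [← hx, ← hy]
    conv_rhs => rw [← hx, ← hy]
    simp only [mul_assoc, hpp, hp1]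
  smul_mem' := by
    intro c x hx
    simp only [Set.mem_setOf_eq] at *
    rw [mul_smul_comm, smul_mul_assoc, hx]
  star_mem' := by
    intro x hx
    simp only [Set.mem_setOf_eq] at *
    conv_rhs => rw [← hx]
    rw [star_mul, star_mul, hp2, mul_assoc]

theorem p_mem_corner {B : Type*} [NonUnitalRing B] [Module ℂ B] [SMulCommClass ℂ B B]
    [IsScalarTower ℂ B B] [StarRing B] (p : B) (hp1 : p * p = p) (hp2 : star p = p) :
    p ∈ cornerAlg p hp1 hp2 := by
  show p * p * p = p
  rw [hp1, hp1]

/-- The fixed point algebra `A^α = {a | α_g a = a ∀ g}` of an action,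
as a star subalgebra of `A`. -/
def fixedAlg {G A : Type*} [Group G] [NonUnitalRing A] [Module ℂ A] [StarRing A]
    (α : G → A ≃⋆ₐ[ℂ] A) : NonUnitalStarSubalgebra ℂ A where
  carrier := {a | ∀ g, α g a = a}
  add_mem' := by
    intro x y hx hy g
    rw [map_add, hx g, hy g]
  zero_mem' := fun g => map_zero (α g)
  mul_mem' := by
    intro x y hx hy g
    rw [map_mul, hx g, hy g]
  smul_mem' := by
    intro c x hx g
    rw [map_smul, hx g]
  star_mem' := by
    intro x hx g
    rw [map_star, hx g]

theorem one_mem_fixedAlg {G A : Type*} [Group G] [Ring A] [Module ℂ A] [StarRing A]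
    (α : G → A ≃⋆ₐ[ℂ] A) : (1 : A) ∈ fixedAlg α := fun g => map_one (α g)

/-- The weak tracial Rokhlin property for an action `α` of a finite group `G` on a unital
C*-algebra. -/
def WeakTracialRokhlin {G A : Type*} [Group G] [Fintype G] [NormedRing A] [StarRing A]
    [PartialOrder A] [Module ℂ A] (α : G → A ≃⋆ₐ[ℂ] A) : Prop :=
  ∀ (ε : ℝ), 0 < ε → ∀ (F : Finset A) (x : A), 0 ≤ x → ‖x‖ = 1 →
    ∃ f : G → A,
      (∀ g, 0 ≤ f g ∧ ‖f g‖ ≤ 1) ∧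
      (∀ g h, g ≠ h → f g * f h = 0) ∧
      (∀ g, ∀ a ∈ F, ‖a * f g - f g * a‖ < ε) ∧
      (∀ g h, ‖α g (f h) - f (g * h)‖ < ε) ∧
      CuntzSubeq (1 - ∑ g, f g) x ∧
      1 - ε < ‖(∑ g, f g) * x * (∑ g, f g)‖

/-- The Rokhlin property for an action `α` of a finite group `G` on a unital C*-algebra. -/
def RokhlinProperty {G A : Type*} [Group G] [Fintype G] [NormedRing A] [StarRing A]
    [Module ℂ A] (α : G → A ≃⋆ₐ[ℂ] A) : Prop :=
  ∀ (ε : ℝ), 0 < ε → ∀ (F : Finset A),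
    ∃ e : G → A,
      (∀ g, e g * e g = e g ∧ star (e g) = e g) ∧
      (∀ g h, g ≠ h → e g * e h = 0) ∧
      (∑ g, e g) = 1 ∧
      (∀ g h, ‖α g (e h) - e (g * h)‖ < ε) ∧
      (∀ g, ∀ a ∈ F, ‖e g * a - a * e g‖ < ε)


set_option linter.unusedSectionVars false
set_option linter.unusedVariables false
set_option maxHeartbeats 2000000

section MatHom

variable {M N : Type*} [NonUnitalRing M] [StarRing M] [Module ℂ M]
  [NonUnitalRing N] [StarRing N] [Module ℂ N]

/-- Entrywise application of a star homomorphism to square matrices. -/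
def matHom (k : ℕ) (φ : M →⋆ₙₐ[ℂ] N) :
    Matrix (Fin k) (Fin k) M →⋆ₙₐ[ℂ] Matrix (Fin k) (Fin k) N where
  toFun X := X.map φ
  map_smul' c X := by ext i j; simp [Matrix.map_apply, Matrix.smul_apply, map_smul]
  map_zero' := by ext i j; simp [Matrix.map_apply]
  map_add' X Y := by ext i j; simp [Matrix.map_apply, map_add]
  map_mul' X Y := by
    ext i j
    simp [Matrix.map_apply, Matrix.mul_apply, map_sum, map_mul]
  map_star' X := by
    ext i j
    simp [Matrix.map_apply, Matrix.star_apply, map_star]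

@[simp] theorem matHom_apply (k : ℕ) (φ : M →⋆ₙₐ[ℂ] N) (X : Matrix (Fin k) (Fin k) M)
    (i j : Fin k) : matHom k φ X i j = φ (X i j) := rfl

theorem matHom_stdBasisMatrix {k : ℕ} (φ : M →⋆ₙₐ[ℂ] N) {i0 j0 : Fin k} (x : M) :
    matHom k φ (Matrix.single i0 j0 x) = Matrix.single i0 j0 (φ x) := by
  ext i j
  simp only [matHom_apply, Matrix.single, Matrix.of_apply]
  split <;> simp

end MatHom

section Embedding

theorem isInducing_pi {ι X Y : Type*} [TopologicalSpace X] [TopologicalSpace Y] {f : X → Y}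
    (hf : Topology.IsInducing f) :
    Topology.IsInducing (fun (x : ι → X) (i : ι) => f (x i)) := by
  constructor
  rw [Pi.topologicalSpace, Pi.topologicalSpace]
  simp only [induced_iInf, induced_compose]
  refine iInf_congr fun i => ?_
  have : (fun (x : ι → X) => (fun (j : ι) => x j) i) = fun x : ι → X => x i := rfl
  rw [hf.eq_induced, induced_compose]
  rfl

theorem isClosedEmbedding_mapMatrix {X Y : Type*} [TopologicalSpace X] [TopologicalSpace Y]
    {f : X → Y} (hf : Topology.IsClosedEmbedding f) {m n : Type*} :
    Topology.IsClosedEmbedding (fun M : Matrix m n X => M.map f) := by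
  refine ⟨⟨?_, ?_⟩, ?_⟩
  · exact isInducing_pi (isInducing_pi hf.isInducing)
  · intro M N h
    ext i j
    exact hf.injective (congrFun (congrFun h i) j)
  · have : Set.range (fun M : Matrix m n X => M.map f) =
        ⋂ (i : m), ⋂ (j : n), (fun M : Matrix m n Y => M i j) ⁻¹' (Set.range f) := by
      ext Y0
      simp only [Set.mem_range, Set.mem_iInter, Set.mem_preimage]
      constructor
      · rintro ⟨M, rfl⟩ i j; exact ⟨M i j, rfl⟩
      · intro h
        refine ⟨Matrix.of fun i j => (h i j).choose, ?_⟩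
        ext i j
        exact (h i j).choose_spec
    rw [this]
    exact isClosed_iInter fun i => isClosed_iInter fun j =>
      IsClosed.preimage ((continuous_apply j).comp (continuous_apply i)) hf.isClosed_range

end Embedding

section Comp

variable {M N : Type*} [NonUnitalRing M] [StarRing M] [Module ℂ M] [TopologicalSpace M]
  [NonUnitalRing N] [StarRing N] [Module ℂ N] [TopologicalSpace N]

theorem IsQuasitracePre.comp {τ : N → ℂ} (h : IsQuasitracePre τ) (φ : M →⋆ₙₐ[ℂ] N)
    (hφ : Topology.IsClosedEmbedding ⇑φ) : IsQuasitracePre (fun x => τ (φ x)) := by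
  obtain ⟨h1, h2, h3, h4⟩ := h
  refine ⟨fun x => ?_, fun x => ?_, fun a b ha hb => ?_, fun B hB hcomm => ?_⟩
  · simp only [map_mul, map_star]; exact h1 (φ x)
  · simpa only [map_mul, map_star] using h2 (φ x)
  · have ha' : IsSelfAdjoint (φ a) := by
      rw [IsSelfAdjoint, ← map_star]; exact congrArg φ ha
    have hb' : IsSelfAdjoint (φ b) := by
      rw [IsSelfAdjoint, ← map_star]; exact congrArg φ hb
    simpa only [map_add, map_smul] using h3 (φ a) (φ b) ha' hb'
  · have hB' : IsClosed ((B.map (φ : M →⋆ₙₐ[ℂ] N) : NonUnitalStarSubalgebra ℂ N) : Set N) := by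
      rw [NonUnitalStarSubalgebra.coe_map]
      exact hφ.isClosedMap _ hB
    have hcomm' : ∀ x ∈ B.map (φ : M →⋆ₙₐ[ℂ] N), ∀ y ∈ B.map (φ : M →⋆ₙₐ[ℂ] N),
        x * y = y * x := by
      rintro x hx y hy
      obtain ⟨x, hxB, rfl⟩ := NonUnitalStarSubalgebra.mem_map.1 hx
      obtain ⟨y, hyB, rfl⟩ := NonUnitalStarSubalgebra.mem_map.1 hy
      rw [← map_mul, ← map_mul, hcomm x hxB y hyB]
    obtain ⟨hadd, hsmul⟩ := h4 _ hB' hcomm'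
    constructor
    · intro x hx y hy
      have := hadd (φ x) (NonUnitalStarSubalgebra.mem_map.2 ⟨x, hx, rfl⟩)
        (φ y) (NonUnitalStarSubalgebra.mem_map.2 ⟨y, hy, rfl⟩)
      simpa only [map_add] using this
    · intro c x hx
      have := hsmul c (φ x) (NonUnitalStarSubalgebra.mem_map.2 ⟨x, hx, rfl⟩)
      simpa only [map_smul] using this

theorem IsQuasitrace.comp {τ : N → ℂ} (h : IsQuasitrace τ) (φ : M →⋆ₙₐ[ℂ] N)
    (hφ : Topology.IsClosedEmbedding ⇑φ) : IsQuasitrace (fun x => τ (φ x)) := by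
  obtain ⟨hpre, τ₂, hpre₂, hstd⟩ := h
  refine ⟨hpre.comp φ hφ, fun X => τ₂ (matHom 2 φ X), ?_, fun x => ?_⟩
  · exact hpre₂.comp (matHom 2 φ) (isClosedEmbedding_mapMatrix hφ)
  · simp only []
    rw [hstd (φ x), matHom_stdBasisMatrix]

end Comp

section Nu

variable {A : Type*} [NormedRing A] [StarRing A] [CStarRing A] {m : ℕ}

/-- Sum-of-norms "norm" on matrices over a normed ring. -/
noncomputable def nuA (M : Matrix (Fin m) (Fin m) A) : ℝ := ∑ i, ∑ j, ‖M i j‖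

theorem nuA_nonneg (M : Matrix (Fin m) (Fin m) A) : 0 ≤ nuA M :=
  Finset.sum_nonneg fun i _ => Finset.sum_nonneg fun j _ => norm_nonneg _

theorem entry_le_nuA (M : Matrix (Fin m) (Fin m) A) (i j : Fin m) : ‖M i j‖ ≤ nuA M := by
  have h1 : ‖M i j‖ ≤ ∑ j', ‖M i j'‖ :=
    Finset.single_le_sum (fun j' _ => norm_nonneg _) (Finset.mem_univ j)
  refine h1.trans ?_
  exact Finset.single_le_sum (fun i' _ => Finset.sum_nonneg fun j' _ => norm_nonneg _)
    (Finset.mem_univ i)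

theorem nuA_add_le (M N : Matrix (Fin m) (Fin m) A) : nuA (M + N) ≤ nuA M + nuA N := by
  have : nuA M + nuA N = ∑ i, ∑ j, (‖M i j‖ + ‖N i j‖) := by
    simp [nuA, Finset.sum_add_distrib]
  rw [this]
  refine Finset.sum_le_sum fun i _ => Finset.sum_le_sum fun j _ => ?_
  exact norm_add_le _ _

theorem nuA_neg (M : Matrix (Fin m) (Fin m) A) : nuA (-M) = nuA M := by
  simp [nuA]

theorem nuA_sum_le {ι : Type*} (s : Finset ι) (f : ι → Matrix (Fin m) (Fin m) A) :
    nuA (∑ i ∈ s, f i) ≤ ∑ i ∈ s, nuA (f i) := by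
  classical
  induction s using Finset.induction_on with
  | empty => simp [nuA]
  | insert _ _ h ih =>
    rw [Finset.sum_insert h, Finset.sum_insert h]
    exact (nuA_add_le _ _).trans (by linarith)

theorem nuA_mul_le (M N : Matrix (Fin m) (Fin m) A) : nuA (M * N) ≤ nuA M * nuA N := by
  calc nuA (M * N) = ∑ i, ∑ j, ‖∑ k, M i k * N k j‖ := by
        simp [nuA, Matrix.mul_apply]
    _ ≤ ∑ i, ∑ j, ∑ k, ‖M i k‖ * ‖N k j‖ := by
        refine Finset.sum_le_sum fun i _ => Finset.sum_le_sum fun j _ => ?_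
        exact (norm_sum_le _ _).trans (Finset.sum_le_sum fun k _ => norm_mul_le _ _)
    _ = ∑ i, ∑ k, ‖M i k‖ * (∑ j, ‖N k j‖) := by
        congr 1; ext i
        rw [Finset.sum_comm]
        congr 1; ext k
        rw [Finset.mul_sum]
    _ ≤ ∑ i, ∑ k, ‖M i k‖ * nuA N := by
        refine Finset.sum_le_sum fun i _ => Finset.sum_le_sum fun k _ => ?_
        refine mul_le_mul_of_nonneg_left ?_ (norm_nonneg _)
        exact Finset.single_le_sum (fun i' _ => Finset.sum_nonneg fun j' _ => norm_nonneg _)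
          (Finset.mem_univ k)
    _ = nuA M * nuA N := by
        simp only [nuA, Finset.sum_mul]

theorem nuA_star (M : Matrix (Fin m) (Fin m) A) : nuA (star M) = nuA M := by
  rw [nuA, nuA, Finset.sum_comm]
  congr 1; ext i
  congr 1; ext j
  rw [Matrix.star_apply, norm_star]

theorem nuA_smul (c : ℂ) [NormedAlgebra ℂ A] (M : Matrix (Fin m) (Fin m) A) :
    nuA (c • M) = ‖c‖ * nuA M := by
  simp [nuA, Matrix.smul_apply, norm_smul, Finset.mul_sum]

theorem nuA_diag_mul_le (x : A) (M : Matrix (Fin m) (Fin m) A) :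
    nuA (Matrix.diagonal (fun _ => x) * M) ≤ ‖x‖ * nuA M := by
  calc nuA (Matrix.diagonal (fun _ => x) * M) = ∑ i, ∑ j, ‖x * M i j‖ := by
        simp [nuA, Matrix.diagonal_mul]
    _ ≤ ∑ i, ∑ j, ‖x‖ * ‖M i j‖ :=
        Finset.sum_le_sum fun i _ => Finset.sum_le_sum fun j _ => norm_mul_le _ _
    _ = ‖x‖ * nuA M := by simp [nuA, Finset.mul_sum]

theorem nuA_mul_diag_le (x : A) (M : Matrix (Fin m) (Fin m) A) :
    nuA (M * Matrix.diagonal (fun _ => x)) ≤ nuA M * ‖x‖ := by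
  calc nuA (M * Matrix.diagonal (fun _ => x)) = ∑ i, ∑ j, ‖M i j * x‖ := by
        simp [nuA, Matrix.mul_diagonal]
    _ ≤ ∑ i, ∑ j, ‖M i j‖ * ‖x‖ :=
        Finset.sum_le_sum fun i _ => Finset.sum_le_sum fun j _ => norm_mul_le _ _
    _ = nuA M * ‖x‖ := by simp [nuA, Finset.sum_mul]

theorem nuA_comm_le (x : A) (M : Matrix (Fin m) (Fin m) A) (δ : ℝ)
    (h : ∀ i j, ‖x * M i j - M i j * x‖ ≤ δ) :
    nuA (Matrix.diagonal (fun _ => x) * M - M * Matrix.diagonal (fun _ => x)) ≤ (m : ℝ)^2 * δ := by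
  calc nuA (Matrix.diagonal (fun _ => x) * M - M * Matrix.diagonal (fun _ => x))
      = ∑ i : Fin m, ∑ j : Fin m, ‖x * M i j - M i j * x‖ := by
        simp [nuA, Matrix.sub_apply, Matrix.diagonal_mul, Matrix.mul_diagonal]
    _ ≤ ∑ _i : Fin m, ∑ _j : Fin m, δ :=
        Finset.sum_le_sum fun i _ => Finset.sum_le_sum fun j _ => h i j
    _ = (m : ℝ)^2 * δ := by simp [sq]; ring

theorem nuA_map_isometric (f : A → A) (hf : ∀ x, ‖f x‖ = ‖x‖) (M : Matrix (Fin m) (Fin m) A) :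
    nuA (M.map f) = nuA M := by
  simp [nuA, Matrix.map_apply, hf]

/-- A selfadjoint idempotent in a C*-algebra has norm at most 1. -/
theorem norm_proj_le_one {e : A} (h1 : e * e = e) (h2 : star e = e) : ‖e‖ ≤ 1 := by
  have h3 : ‖e‖ * ‖e‖ = ‖e‖ := by
    rw [← CStarRing.norm_star_mul_self (x := e), h2, h1]
  nlinarith [norm_nonneg e]

end Nu

section AM

variable {G : Type*} [Group G] [Fintype G] {A : Type*} [CStarAlgebra A] {m : ℕ}
variable (α : G → A ≃⋆ₐ[ℂ] A)

theorem am_mul (g : G) (M N : Matrix (Fin m) (Fin m) A) :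
    (M * N).map (α g) = M.map (α g) * N.map (α g) := by
  ext i j
  simp [Matrix.map_apply, Matrix.mul_apply, map_sum, map_mul]

theorem am_sub (g : G) (M N : Matrix (Fin m) (Fin m) A) :
    (M - N).map (α g) = M.map (α g) - N.map (α g) := by
  ext i j
  simp [Matrix.map_apply, Matrix.sub_apply, map_sub]

theorem am_sum (g : G) {ι : Type*} (s : Finset ι) (f : ι → Matrix (Fin m) (Fin m) A) :
    (∑ i ∈ s, f i).map (α g) = ∑ i ∈ s, (f i).map (α g) := by
  ext i j
  simp [Matrix.map_apply, Matrix.sum_apply, map_sum]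

theorem am_smul (g : G) (c : ℂ) (M : Matrix (Fin m) (Fin m) A) :
    (c • M).map (α g) = c • M.map (α g) := by
  ext i j
  simp [Matrix.map_apply, Matrix.smul_apply, map_smul]

theorem am_star (g : G) (M : Matrix (Fin m) (Fin m) A) :
    (star M).map (α g) = star (M.map (α g)) := by
  ext i j
  simp [Matrix.map_apply, Matrix.star_apply, map_star]

theorem am_diag (g : G) (x : A) :
    (Matrix.diagonal (fun _ : Fin m => x)).map (α g)
      = Matrix.diagonal (fun _ : Fin m => α g x) :=
  Matrix.diagonal_map (map_zero _)

theorem am_am (hαmul : ∀ (g h : G) (x : A), α (g * h) x = α g (α h x)) (g h : G)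
    (M : Matrix (Fin m) (Fin m) A) :
    (M.map (α h)).map (α g) = M.map (α (g * h)) := by
  rw [Matrix.map_map]
  have : ⇑(α g) ∘ ⇑(α h) = ⇑(α (g * h)) := funext fun x => (hαmul g h x).symm
  rw [this]

theorem am_fixed (g : G) (M : Matrix (Fin m) (Fin m) A)
    (hM : ∀ i j, ∀ k : G, α k (M i j) = M i j) : M.map (α g) = M := by
  ext i j
  exact hM i j g

theorem diag_star {x : A} (hx : star x = x) :
    star (Matrix.diagonal (fun _ : Fin m => x)) = Matrix.diagonal (fun _ : Fin m => x) := by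
  ext i j
  rw [Matrix.star_apply]
  by_cases h : i = j
  · subst h; simp [Matrix.diagonal_apply, hx]
  · simp [Matrix.diagonal_apply, h, Ne.symm h]

theorem diag_mul_diag (x y : A) :
    Matrix.diagonal (fun _ : Fin m => x) * Matrix.diagonal (fun _ : Fin m => y)
      = Matrix.diagonal (fun _ : Fin m => x * y) :=
  Matrix.diagonal_mul_diagonal _ _

theorem diag_sub (x y : A) :
    Matrix.diagonal (fun _ : Fin m => x) - Matrix.diagonal (fun _ : Fin m => y)
      = Matrix.diagonal (fun _ : Fin m => x - y) :=
  Matrix.diagonal_sub _ _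

theorem diag_sum (e : G → A) :
    ∑ g : G, Matrix.diagonal (fun _ : Fin m => e g)
      = Matrix.diagonal (fun _ : Fin m => ∑ g : G, e g) := by
  ext i j
  by_cases hij : i = j <;> simp [Matrix.sum_apply, Matrix.diagonal_apply, hij]

end AM


section Transfer

variable {M N : Type*} [NonUnitalRing M] [StarRing M] [Module ℂ M]
  [NonUnitalRing N] [StarRing N] [Module ℂ N]

theorem starPos_map (φ : M →⋆ₙₐ[ℂ] N) {a : M} (h : StarPos a) : StarPos (φ a) := by
  obtain ⟨c, rfl⟩ := h
  exact ⟨φ c, by rw [map_mul, map_star]⟩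

theorem mulPow_map (φ : M →⋆ₙₐ[ℂ] N) (x : M) (k : ℕ) :
    φ (mulPow x k) = mulPow (φ x) k := by
  induction k with
  | zero => rfl
  | succ n ih =>
    show φ (mulPow x n * x) = mulPow (φ x) n * φ x
    rw [map_mul, ih]

theorem hasDTau_comp (φ : M →⋆ₙₐ[ℂ] N) {σ : N → ℂ} {a : M} {d : ℝ}
    (h : HasDTau σ (φ a) d) : HasDTau (fun x => σ (φ x)) a d := by
  intro c hc
  exact h (fun k => φ (c k)) fun k =>
    ⟨starPos_map φ (hc k).1, by rw [← mulPow_map, (hc k).2]⟩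

end Transfer

section Avg

variable {G : Type*} [Group G] [Fintype G] {A : Type*} [CStarAlgebra A] {m : ℕ}

theorem avg_step (α : G → A ≃⋆ₐ[ℂ] A)
    (hαmul : ∀ (g h : G) (x : A), α (g * h) x = α g (α h x))
    (hrok : RokhlinProperty α)
    (a' b' : Matrix (Fin m) (Fin m) A)
    (ha' : ∀ i j, ∀ g : G, α g (a' i j) = a' i j)
    (hb' : ∀ i j, ∀ g : G, α g (b' i j) = b' i j)
    (V : Matrix (Fin m) (Fin m) A) {δ' : ℝ} (hδ' : 0 < δ') :
    ∃ u : Matrix (Fin m) (Fin m) A, (∀ i j, ∀ g : G, α g (u i j) = u i j) ∧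
      nuA (u * b' * star u - a') ≤
        (Fintype.card G : ℝ) * nuA (V * b' * star V - a') + δ' := by
  classical
  set N : ℝ := (Fintype.card G : ℝ) with hNdef
  have hN1 : 1 ≤ N := by
    rw [hNdef]
    exact_mod_cast Fintype.card_pos (α := G)
  have hN0 : 0 ≤ N := by linarith
  set MV : ℝ := nuA V with hMVdef
  set K : ℝ := nuA b' with hKdef
  set ε : ℝ := nuA (V * b' * star V - a') with hεdef
  have hMV0 : 0 ≤ MV := nuA_nonneg V
  have hK0 : 0 ≤ K := nuA_nonneg b'
  have hε0 : 0 ≤ ε := nuA_nonneg _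
  set q : ℝ := (m : ℝ)^2 with hqdef
  have hq0 : 0 ≤ q := by positivity
  set C : ℝ := 3*N^2*MV^2*K + N^2*q*(MV*K + MV) + N*q with hCdef
  have hC0 : 0 ≤ C := by positivity
  set δ : ℝ := min 1 (δ'/(C+1)) with hδdef
  have hδ0 : 0 < δ := lt_min one_pos (div_pos hδ' (by linarith))
  have hδ1 : δ ≤ 1 := min_le_left _ _
  have hδC : δ * C ≤ δ' := by
    have h1 : δ ≤ δ'/(C+1) := min_le_right _ _
    calc δ * C ≤ (δ'/(C+1)) * C := mul_le_mul_of_nonneg_right h1 hC0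
      _ ≤ δ' := by
          rw [div_mul_eq_mul_div, div_le_iff₀ (by linarith : (0:ℝ) < C + 1)]
          nlinarith
  -- the finite set for the Rokhlin property
  set F₀ : Finset A :=
    ((Finset.univ.image fun p : G × Fin m × Fin m => (V.map (α p.1) * b') p.2.1 p.2.2) ∪
     (Finset.univ.image fun p : G × Fin m × Fin m => (star (V.map (α p.1))) p.2.1 p.2.2)) ∪
     (Finset.univ.image fun p : Fin m × Fin m => a' p.1 p.2) with hF₀def
  obtain ⟨e, hP, hO, hS, hαe, hCe⟩ := hrok δ hδ0 F₀
  have hne : ∀ g, ‖e g‖ ≤ 1 := fun g => norm_proj_le_one (hP g).1 (hP g).2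
  -- notation
  set D : A → Matrix (Fin m) (Fin m) A := fun x => Matrix.diagonal fun _ => x with hDdef
  set Vg : G → Matrix (Fin m) (Fin m) A := fun g => V.map (α g) with hVgdef
  set X : G → Matrix (Fin m) (Fin m) A := fun g => Vg g * b' with hXdef
  set Y : G → Matrix (Fin m) (Fin m) A := fun g => star (Vg g) with hYdef
  set W : Matrix (Fin m) (Fin m) A := ∑ g, D (e g) * Vg g with hWdef
  set u : Matrix (Fin m) (Fin m) A := ((Fintype.card G : ℂ))⁻¹ • ∑ k, W.map (α k) with hudef
  -- membership facts
  have hXF : ∀ g i j, X g i j ∈ F₀ := by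
    intro g i j
    refine Finset.mem_union_left _ (Finset.mem_union_left _ ?_)
    exact Finset.mem_image.2 ⟨(g, i, j), Finset.mem_univ _, rfl⟩
  have hYF : ∀ g i j, Y g i j ∈ F₀ := by
    intro g i j
    refine Finset.mem_union_left _ (Finset.mem_union_right _ ?_)
    exact Finset.mem_image.2 ⟨(g, i, j), Finset.mem_univ _, rfl⟩
  have haF : ∀ i j, a' i j ∈ F₀ := by
    intro i j
    refine Finset.mem_union_right _ ?_
    exact Finset.mem_image.2 ⟨(i, j), Finset.mem_univ _, rfl⟩
  -- commutator bounds
  have hcom : ∀ (g : G) (M : Matrix (Fin m) (Fin m) A), (∀ i j, M i j ∈ F₀) →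
      nuA (D (e g) * M - M * D (e g)) ≤ q * δ := by
    intro g M hM
    exact nuA_comm_le _ _ _ fun i j => (hCe g _ (hM i j)).le
  have hcom' : ∀ (g : G) (M : Matrix (Fin m) (Fin m) A), (∀ i j, M i j ∈ F₀) →
      nuA (M * D (e g) - D (e g) * M) ≤ q * δ := by
    intro g M hM
    rw [← nuA_neg, neg_sub]
    exact hcom g M hM
  -- norms
  have hVgn : ∀ g, nuA (Vg g) = MV := fun g =>
    nuA_map_isometric _ (fun x => StarAlgEquiv.norm_map (α g) x) V
  have hXn : ∀ g, nuA (X g) ≤ MV * K := fun g => by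
    have := nuA_mul_le (Vg g) b'
    rwa [hVgn g] at this
  have hYn : ∀ g, nuA (Y g) = MV := fun g => by rw [hYdef]; simp only []; rw [nuA_star, hVgn g]
  -- star W
  have hstarW : star W = ∑ h, Y h * D (e h) := by
    rw [hWdef, star_sum]
    refine Finset.sum_congr rfl fun h _ => ?_
    rw [star_mul, diag_star (hP h).2]
  -- expansion of W * b' * star W
  have hWbW : W * b' * star W = ∑ g, ∑ h, D (e g) * (X g * (Y h * D (e h))) := by
    calc W * b' * star W
        = (∑ g, D (e g) * Vg g) * b' * (∑ h, Y h * D (e h)) := by rw [← hstarW, ← hWdef]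
      _ = (∑ g, D (e g) * Vg g * b') * (∑ h, Y h * D (e h)) := by rw [Finset.sum_mul]
      _ = ∑ g, ∑ h, D (e g) * Vg g * b' * (Y h * D (e h)) := by rw [Finset.sum_mul_sum]
      _ = ∑ g, ∑ h, D (e g) * (X g * (Y h * D (e h))) := by
          refine Finset.sum_congr rfl fun g _ => Finset.sum_congr rfl fun h _ => ?_
          rw [hXdef]
          simp only [mul_assoc]
  -- termwise decomposition
  set T1 : G → G → Matrix (Fin m) (Fin m) A :=
    fun g h => D (e g) * (X g * (Y h * D (e h) - D (e h) * Y h)) with hT1def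
  set T2 : G → G → Matrix (Fin m) (Fin m) A :=
    fun g h => D (e g) * ((X g * D (e h) - D (e h) * X g) * Y h) with hT2def
  set T3 : G → G → Matrix (Fin m) (Fin m) A :=
    fun g h => D (e g) * (D (e h) * (X g * Y h)) with hT3def
  have hsplit : ∀ g h, D (e g) * (X g * (Y h * D (e h))) = T1 g h + T2 g h + T3 g h := by
    intro g h
    rw [hT1def, hT2def, hT3def]
    noncomm_ring
  have h3off : ∀ g h, g ≠ h → T3 g h = 0 := by
    intro g h hgh
    rw [hT3def]
    simp only []
    rw [← mul_assoc, diag_mul_diag, hO g h hgh]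
    have : Matrix.diagonal (fun _ : Fin m => (0:A)) = 0 := Matrix.diagonal_zero
    rw [this, zero_mul]
  set R : G → Matrix (Fin m) (Fin m) A := fun g => X g * Y g - a' with hRdef
  set Cg : G → Matrix (Fin m) (Fin m) A := fun g => D (e g) * a' - a' * D (e g) with hCgdef
  have h3diag : ∀ g, T3 g g = a' * D (e g) + Cg g + D (e g) * R g := by
    intro g
    have h1 : D (e g) * D (e g) = D (e g) := by
      rw [hDdef]; simp only []
      rw [diag_mul_diag, (hP g).1]
    have h2 : T3 g g = D (e g) * (X g * Y g) := by
      rw [hT3def]; simp only []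
      rw [← mul_assoc, h1]
    rw [h2, hRdef, hCgdef]
    noncomm_ring
  have hRn : ∀ g, nuA (R g) = ε := by
    intro g
    have h1 : (V * b' * star V).map (α g) = X g * Y g := by
      rw [am_mul, am_mul, am_star, am_fixed α g b' hb']
    have h2 : R g = ((V * b' * star V) - a').map (α g) := by
      rw [am_sub, h1, am_fixed α g a' ha', hRdef]
    rw [h2, nuA_map_isometric _ (fun x => StarAlgEquiv.norm_map (α g) x), hεdef]
  -- key identity for W
  have hsum3 : ∑ g, ∑ h, T3 g h = a' + (∑ g, Cg g + ∑ g, D (e g) * R g) := by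
    have h1 : ∀ g : G, ∑ h, T3 g h = T3 g g :=
      fun g => Finset.sum_eq_single_of_mem g (Finset.mem_univ g)
        (fun h _ hne => h3off g h (Ne.symm hne))
    calc ∑ g, ∑ h, T3 g h = ∑ g, T3 g g := Finset.sum_congr rfl fun g _ => h1 g
      _ = ∑ g, (a' * D (e g) + Cg g + D (e g) * R g) :=
          Finset.sum_congr rfl fun g _ => h3diag g
      _ = (∑ g, a' * D (e g)) + ((∑ g, Cg g) + ∑ g, D (e g) * R g) := by
          rw [Finset.sum_add_distrib, Finset.sum_add_distrib]
          abel
      _ = a' + (∑ g, Cg g + ∑ g, D (e g) * R g) := by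
          rw [← Finset.mul_sum, hDdef]
          simp only []
          rw [diag_sum e, hS]
          have : Matrix.diagonal (fun _ : Fin m => (1:A)) = 1 := Matrix.diagonal_one
          rw [this, mul_one]
  have hkey : W * b' * star W - a' =
      (∑ g, ∑ h, (T1 g h + T2 g h)) + (∑ g, Cg g + ∑ g, D (e g) * R g) := by
    have h2 : W * b' * star W =
        (∑ g, ∑ h, (T1 g h + T2 g h)) + ∑ g, ∑ h, T3 g h := by
      rw [hWbW]
      calc ∑ g, ∑ h, D (e g) * (X g * (Y h * D (e h)))
          = ∑ g, ∑ h, (T1 g h + T2 g h + T3 g h) :=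
            Finset.sum_congr rfl fun g _ => Finset.sum_congr rfl fun h _ => hsplit g h
        _ = (∑ g, ∑ h, (T1 g h + T2 g h)) + ∑ g, ∑ h, T3 g h := by
            rw [← Finset.sum_add_distrib]
            refine Finset.sum_congr rfl fun g _ => ?_
            rw [← Finset.sum_add_distrib]
    rw [h2, hsum3]
    abel
  -- bounds on the pieces
  have hT1n : ∀ g h, nuA (T1 g h) ≤ MV * K * (q * δ) := by
    intro g h
    have hQ : nuA (Y h * D (e h) - D (e h) * Y h) ≤ q * δ := hcom' h (Y h) (hYF h)
    calc nuA (T1 g h) ≤ ‖e g‖ * nuA (X g * (Y h * D (e h) - D (e h) * Y h)) :=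
          nuA_diag_mul_le _ _
      _ ≤ 1 * nuA (X g * (Y h * D (e h) - D (e h) * Y h)) :=
          mul_le_mul_of_nonneg_right (hne g) (nuA_nonneg _)
      _ = nuA (X g * (Y h * D (e h) - D (e h) * Y h)) := one_mul _
      _ ≤ nuA (X g) * nuA (Y h * D (e h) - D (e h) * Y h) := nuA_mul_le _ _
      _ ≤ (MV * K) * (q * δ) := by
          refine mul_le_mul (hXn g) hQ (nuA_nonneg _) ?_
          positivity
  have hT2n : ∀ g h, nuA (T2 g h) ≤ (q * δ) * MV := by
    intro g h
    have hQ : nuA (X g * D (e h) - D (e h) * X g) ≤ q * δ := hcom' h (X g) (hXF g)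
    calc nuA (T2 g h) ≤ ‖e g‖ * nuA ((X g * D (e h) - D (e h) * X g) * Y h) :=
          nuA_diag_mul_le _ _
      _ ≤ 1 * nuA ((X g * D (e h) - D (e h) * X g) * Y h) :=
          mul_le_mul_of_nonneg_right (hne g) (nuA_nonneg _)
      _ = nuA ((X g * D (e h) - D (e h) * X g) * Y h) := one_mul _
      _ ≤ nuA (X g * D (e h) - D (e h) * X g) * nuA (Y h) := nuA_mul_le _ _
      _ ≤ (q * δ) * MV := by
          rw [hYn h]
          exact mul_le_mul_of_nonneg_right hQ hMV0
  have hCgn : ∀ g, nuA (Cg g) ≤ q * δ := fun g => hcom g a' haF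
  have hDRn : ∀ g, nuA (D (e g) * R g) ≤ ε := by
    intro g
    calc nuA (D (e g) * R g) ≤ ‖e g‖ * nuA (R g) := nuA_diag_mul_le _ _
      _ ≤ 1 * ε := by
          rw [hRn g]
          exact mul_le_mul_of_nonneg_right (hne g) hε0
      _ = ε := one_mul _
  have hWerr : nuA (W * b' * star W - a') ≤
      N^2 * (MV * K * (q * δ) + (q * δ) * MV) + (N * (q * δ) + N * ε) := by
    rw [hkey]
    have step1 : nuA ((∑ g, ∑ h, (T1 g h + T2 g h)) + (∑ g, Cg g + ∑ g, D (e g) * R g)) ≤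
        nuA (∑ g, ∑ h, (T1 g h + T2 g h)) + (nuA (∑ g, Cg g) + nuA (∑ g, D (e g) * R g)) := by
      refine (nuA_add_le _ _).trans ?_
      have := nuA_add_le (∑ g, Cg g) (∑ g, D (e g) * R g)
      linarith
    refine step1.trans ?_
    have b1 : nuA (∑ g, ∑ h, (T1 g h + T2 g h)) ≤ N^2 * (MV * K * (q * δ) + (q * δ) * MV) := by
      refine (nuA_sum_le _ _).trans ?_
      have h1 : ∀ g : G, nuA (∑ h, (T1 g h + T2 g h)) ≤ N * (MV * K * (q * δ) + (q * δ) * MV) := by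
        intro g
        refine (nuA_sum_le _ _).trans ?_
        have h2 : ∀ h : G, nuA (T1 g h + T2 g h) ≤ MV * K * (q * δ) + (q * δ) * MV :=
          fun h => (nuA_add_le _ _).trans (add_le_add (hT1n g h) (hT2n g h))
        calc ∑ h, nuA (T1 g h + T2 g h) ≤ ∑ _h : G, (MV * K * (q * δ) + (q * δ) * MV) :=
              Finset.sum_le_sum fun h _ => h2 h
          _ = N * (MV * K * (q * δ) + (q * δ) * MV) := by
              rw [Finset.sum_const, Finset.card_univ, nsmul_eq_mul, hNdef]
      calc ∑ g, nuA (∑ h, (T1 g h + T2 g h)) ≤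
            ∑ _g : G, N * (MV * K * (q * δ) + (q * δ) * MV) :=
            Finset.sum_le_sum fun g _ => h1 g
        _ = N^2 * (MV * K * (q * δ) + (q * δ) * MV) := by
            rw [Finset.sum_const, Finset.card_univ, nsmul_eq_mul, hNdef]
            ring
    have b2 : nuA (∑ g, Cg g) ≤ N * (q * δ) := by
      refine (nuA_sum_le _ _).trans ?_
      calc ∑ g, nuA (Cg g) ≤ ∑ _g : G, q * δ := Finset.sum_le_sum fun g _ => hCgn g
        _ = N * (q * δ) := by rw [Finset.sum_const, Finset.card_univ, nsmul_eq_mul, hNdef]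
    have b3 : nuA (∑ g, D (e g) * R g) ≤ N * ε := by
      refine (nuA_sum_le _ _).trans ?_
      calc ∑ g, nuA (D (e g) * R g) ≤ ∑ _g : G, ε := Finset.sum_le_sum fun g _ => hDRn g
        _ = N * ε := by rw [Finset.sum_const, Finset.card_univ, nsmul_eq_mul, hNdef]
    linarith
  -- the averaged element
  have hαW : ∀ k : G, W.map (α k) - W = ∑ g, D (α k (e g) - e (k*g)) * Vg (k*g) := by
    intro k
    have h1 : W.map (α k) = ∑ g, D (α k (e g)) * Vg (k*g) := by
      rw [hWdef, am_sum]
      refine Finset.sum_congr rfl fun g _ => ?_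
      rw [am_mul, hDdef]
      simp only []
      rw [am_diag, hVgdef]
      simp only []
      rw [am_am α hαmul k g]
    have h2 : W = ∑ g, D (e (k*g)) * Vg (k*g) :=
      (Fintype.sum_equiv (Equiv.mulLeft k)
        (fun g => D (e (k*g)) * Vg (k*g)) (fun g' => D (e g') * Vg g') fun g => rfl).symm
    rw [h1]
    nth_rewrite 1 [h2]
    rw [← Finset.sum_sub_distrib]
    refine Finset.sum_congr rfl fun g _ => ?_
    rw [← sub_mul, hDdef]
    simp only []
    rw [diag_sub]
  have hαWn : ∀ k : G, nuA (W.map (α k) - W) ≤ N * (δ * MV) := by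
    intro k
    rw [hαW k]
    refine (nuA_sum_le _ _).trans ?_
    have h1 : ∀ g : G, nuA (D (α k (e g) - e (k*g)) * Vg (k*g)) ≤ δ * MV := by
      intro g
      calc nuA (D (α k (e g) - e (k*g)) * Vg (k*g)) ≤
            ‖α k (e g) - e (k*g)‖ * nuA (Vg (k*g)) := nuA_diag_mul_le _ _
        _ ≤ δ * MV := by
            rw [hVgn]
            exact mul_le_mul_of_nonneg_right (hαe k g).le hMV0
    calc ∑ g, nuA (D (α k (e g) - e (k*g)) * Vg (k*g)) ≤ ∑ _g : G, δ * MV :=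
          Finset.sum_le_sum fun g _ => h1 g
      _ = N * (δ * MV) := by rw [Finset.sum_const, Finset.card_univ, nsmul_eq_mul, hNdef]
  have hNc : (Fintype.card G : ℂ) ≠ 0 := Nat.cast_ne_zero.2 Fintype.card_ne_zero
  have huW : u - W = ((Fintype.card G : ℂ))⁻¹ • ∑ k, (W.map (α k) - W) := by
    rw [Finset.sum_sub_distrib, Finset.sum_const, Finset.card_univ, smul_sub, hudef]
    congr 1
    rw [← Nat.cast_smul_eq_nsmul ℂ, smul_smul, inv_mul_cancel₀ hNc, one_smul]
  have huWn : nuA (u - W) ≤ N * (δ * MV) := by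
    rw [huW, nuA_smul]
    have h1 : ‖((Fintype.card G : ℂ))⁻¹‖ = N⁻¹ := by
      rw [norm_inv, Complex.norm_natCast, hNdef]
    rw [h1]
    have h2 : nuA (∑ k, (W.map (α k) - W)) ≤ N * (N * (δ * MV)) := by
      refine (nuA_sum_le _ _).trans ?_
      calc ∑ k, nuA (W.map (α k) - W) ≤ ∑ _k : G, N * (δ * MV) :=
            Finset.sum_le_sum fun k _ => hαWn k
        _ = N * (N * (δ * MV)) := by
            rw [Finset.sum_const, Finset.card_univ, nsmul_eq_mul, hNdef]
    calc N⁻¹ * nuA (∑ k, (W.map (α k) - W)) ≤ N⁻¹ * (N * (N * (δ * MV))) := by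
          refine mul_le_mul_of_nonneg_left h2 ?_
          positivity
      _ = N * (δ * MV) := by
          field_simp
  have hWn : nuA W ≤ N * MV := by
    rw [hWdef]
    refine (nuA_sum_le _ _).trans ?_
    have h1 : ∀ g : G, nuA (D (e g) * Vg g) ≤ MV := by
      intro g
      calc nuA (D (e g) * Vg g) ≤ ‖e g‖ * nuA (Vg g) := nuA_diag_mul_le _ _
        _ ≤ 1 * MV := by
            rw [hVgn]
            exact mul_le_mul_of_nonneg_right (hne g) hMV0
        _ = MV := one_mul _
    calc ∑ g, nuA (D (e g) * Vg g) ≤ ∑ _g : G, MV := Finset.sum_le_sum fun g _ => h1 g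
      _ = N * MV := by rw [Finset.sum_const, Finset.card_univ, nsmul_eq_mul, hNdef]
  have hun : nuA u ≤ 2 * (N * MV) := by
    have h1 : u = W + (u - W) := by abel
    calc nuA u = nuA (W + (u - W)) := by rw [← h1]
      _ ≤ nuA W + nuA (u - W) := nuA_add_le _ _
      _ ≤ N * MV + N * (δ * MV) := add_le_add hWn huWn
      _ ≤ 2 * (N * MV) := by nlinarith [mul_nonneg (mul_nonneg hN0 hMV0) (sub_nonneg.mpr hδ1)]
  -- fixedness of u
  have hufix : ∀ i j, ∀ g : G, α g (u i j) = u i j := by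
    intro i j g
    have hmat : u.map (α g) = u := by
      rw [hudef, am_smul, am_sum]
      congr 1
      have h1 : ∀ k : G, (W.map (α k)).map (α g) = W.map (α (g * k)) := fun k =>
        am_am α hαmul g k W
      calc ∑ k, (W.map (α k)).map (α g) = ∑ k, W.map (α (g * k)) :=
            Finset.sum_congr rfl fun k _ => h1 k
        _ = ∑ k, W.map (α k) :=
            Fintype.sum_equiv (Equiv.mulLeft g) _ _ fun k => rfl
    conv_rhs => rw [← hmat]
    rfl
  -- final estimate
  refine ⟨u, hufix, ?_⟩
  have hfin : u * b' * star u - a' =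
      (u - W) * (b' * star u) + W * (b' * star (u - W)) + (W * b' * star W - a') := by
    rw [star_sub]
    noncomm_ring
  have m1 : nuA ((u - W) * (b' * star u)) ≤ (N * (δ * MV)) * (K * (2 * (N * MV))) := by
    have h1 : nuA (b' * star u) ≤ K * (2 * (N * MV)) := by
      calc nuA (b' * star u) ≤ K * nuA (star u) := nuA_mul_le _ _
        _ = K * nuA u := by rw [nuA_star]
        _ ≤ K * (2 * (N * MV)) := mul_le_mul_of_nonneg_left hun hK0
    exact (nuA_mul_le _ _).trans (mul_le_mul huWn h1 (nuA_nonneg _) (by positivity))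
  have m2 : nuA (W * (b' * star (u - W))) ≤ (N * MV) * (K * (N * (δ * MV))) := by
    have h1 : nuA (b' * star (u - W)) ≤ K * (N * (δ * MV)) := by
      calc nuA (b' * star (u - W)) ≤ K * nuA (star (u - W)) := nuA_mul_le _ _
        _ = K * nuA (u - W) := by rw [nuA_star]
        _ ≤ K * (N * (δ * MV)) := mul_le_mul_of_nonneg_left huWn hK0
    exact (nuA_mul_le _ _).trans (mul_le_mul hWn h1 (nuA_nonneg _) (by positivity))
  have mtotal : nuA (u * b' * star u - a') ≤ N * ε + δ * C := by
    rw [hfin]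
    have s1 := nuA_add_le ((u - W) * (b' * star u) + W * (b' * star (u - W)))
      (W * b' * star W - a')
    have s2 := nuA_add_le ((u - W) * (b' * star u)) (W * (b' * star (u - W)))
    have : nuA ((u - W) * (b' * star u) + W * (b' * star (u - W)) + (W * b' * star W - a')) ≤
        (N * (δ * MV)) * (K * (2 * (N * MV))) + (N * MV) * (K * (N * (δ * MV))) +
        (N^2 * (MV * K * (q * δ) + (q * δ) * MV) + (N * (q * δ) + N * ε)) := by
      linarith
    refine this.trans ?_
    rw [hCdef]
    ring_nf
    nlinarith [sq_nonneg N, sq_nonneg MV]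
  refine mtotal.trans ?_
  have : N * nuA (V * b' * star V - a') = N * ε := by rw [hεdef]
  rw [this]
  linarith

end Avg

section Upgrade

variable {G : Type*} [Group G] [Fintype G] {A : Type*} [CStarAlgebra A] {m : ℕ}

theorem cuntz_upgrade (α : G → A ≃⋆ₐ[ℂ] A)
    (hαmul : ∀ (g h : G) (x : A), α (g * h) x = α g (α h x))
    (hrok : RokhlinProperty α)
    (a b : Matrix (Fin m) (Fin m) ↥(fixedAlg α))
    (h : CuntzSubeq (matHom m (NonUnitalStarSubalgebraClass.subtype (fixedAlg α)) a)
      (matHom m (NonUnitalStarSubalgebraClass.subtype (fixedAlg α)) b)) :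
    CuntzSubeq a b := by
  set ι : ↥(fixedAlg α) →⋆ₙₐ[ℂ] A := NonUnitalStarSubalgebraClass.subtype (fixedAlg α) with hιdef
  set ψ := matHom m ι with hψdef
  obtain ⟨v, hv⟩ := h
  set N : ℝ := (Fintype.card G : ℝ) with hNdef
  -- the error of the approximating sequence tends to zero
  have hcont : Continuous fun M : Matrix (Fin m) (Fin m) A => nuA (M - ψ a) := by
    apply continuous_finset_sum
    intro i _
    apply continuous_finset_sum
    intro j _
    have heq : (fun M : Matrix (Fin m) (Fin m) A => ‖(M - ψ a) i j‖) =
        fun M : Matrix (Fin m) (Fin m) A => ‖M i j - (ψ a) i j‖ := by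
      funext M
      rw [Matrix.sub_apply]
    show Continuous fun M : Matrix (Fin m) (Fin m) A => ‖(M - ψ a) i j‖
    rw [heq]
    have h1 : Continuous fun M : Matrix (Fin m) (Fin m) A => M i j :=
      (continuous_apply j).comp (continuous_apply (A := fun _ : Fin m => Fin m → A) i)
    exact (h1.sub continuous_const).norm
  have hε : Tendsto (fun n => nuA (v n * ψ b * star (v n) - ψ a)) atTop (𝓝 0) := by
    have h0 : nuA ((ψ a : Matrix (Fin m) (Fin m) A) - ψ a) = 0 := by
      simp [nuA]
    have := (hcont.tendsto (ψ a)).comp hv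
    rwa [h0] at this
  have hafix : ∀ i j, ∀ g : G, α g ((ψ a) i j) = (ψ a) i j := fun i j g => (a i j).2 g
  have hbfix : ∀ i j, ∀ g : G, α g ((ψ b) i j) = (ψ b) i j := fun i j g => (b i j).2 g
  choose u hufix hub using fun n : ℕ =>
    avg_step α hαmul hrok (ψ a) (ψ b) hafix hbfix (v n)
      (δ' := 1/((n:ℝ)+1)) (by positivity)
  set w : ℕ → Matrix (Fin m) (Fin m) ↥(fixedAlg α) :=
    fun n => Matrix.of fun i j => (⟨u n i j, fun g => hufix n i j g⟩ : ↥(fixedAlg α)) with hwdef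
  refine ⟨w, ?_⟩
  refine tendsto_pi_nhds.2 ?_
  intro i
  rw [tendsto_pi_nhds]
  intro j
  rw [tendsto_subtype_rng]
  have hcoe : (fun n => (((w n * b * star (w n)) i j : ↥(fixedAlg α)) : A)) =
      fun n => (u n * ψ b * star (u n)) i j := by
    funext n
    have h1 : ψ (w n * b * star (w n)) = ψ (w n) * ψ b * star (ψ (w n)) := by
      rw [map_mul, map_mul, map_star]
    have h2 : ψ (w n) = u n := by ext i' j'; rfl
    calc (((w n * b * star (w n)) i j : ↥(fixedAlg α)) : A)
        = ψ (w n * b * star (w n)) i j := rfl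
      _ = (u n * ψ b * star (u n)) i j := by rw [h1, h2]
  rw [hcoe]
  have hlim : ((a i j : ↥(fixedAlg α)) : A) = (ψ a) i j := rfl
  rw [hlim]
  rw [tendsto_iff_norm_sub_tendsto_zero]
  have hbd : ∀ n, ‖(u n * ψ b * star (u n)) i j - (ψ a) i j‖ ≤
      N * nuA (v n * ψ b * star (v n) - ψ a) + 1/((n:ℝ)+1) := by
    intro n
    have h1 : ‖(u n * ψ b * star (u n)) i j - (ψ a) i j‖ ≤
        nuA (u n * ψ b * star (u n) - ψ a) := by
      have := entry_le_nuA (u n * ψ b * star (u n) - ψ a) i j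
      simpa [Matrix.sub_apply] using this
    exact h1.trans (hub n)
  have hgl : Tendsto (fun n : ℕ => N * nuA (v n * ψ b * star (v n) - ψ a) + 1/((n:ℝ)+1))
      atTop (𝓝 0) := by
    have h1 := hε.const_mul N
    have h2 : Tendsto (fun n : ℕ => 1/((n:ℝ)+1)) atTop (𝓝 0) :=
      tendsto_one_div_add_atTop_nhds_zero_nat
    have := h1.add h2
    simpa using this
  exact squeeze_zero (fun n => norm_nonneg _) hbd hgl

end Upgrade


end RC

open RC

/-- Let `G` be a finite group, `A` a stably finite unital C*-algebra, and `α` an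
action of `G` on `A` with the Rokhlin property.  Then `rc (A^α) ≤ rc (A)`. -/
theorem statement16 {G : Type*} [Group G] [Fintype G]
    {A : Type*} [CStarAlgebra A] [PartialOrder A] [StarOrderedRing A]
    (hsf : StablyFinite A)
    (α : G → A ≃⋆ₐ[ℂ] A)
    (hα1 : ∀ x : A, α 1 x = x)
    (hαmul : ∀ (g h : G) (x : A), α (g * h) x = α g (α h x))
    (hrok : RokhlinProperty α) :
    radiusCmp (⟨1, one_mem_fixedAlg α⟩ : ↥(fixedAlg α)) ≤ radiusCmp (1 : A) := by
  refine sInf_le_sInf ?_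
  rintro x ⟨r, hr0, rfl, hrc⟩
  refine ⟨r, hr0, rfl, ?_⟩
  -- it suffices to show that `r`-comparison passes from `A` to the fixed point algebra
  intro m a b ha hb hcond
  have hFclosed : IsClosed ((fixedAlg α : NonUnitalStarSubalgebra ℂ A) : Set A) := by
    have hset : ((fixedAlg α : NonUnitalStarSubalgebra ℂ A) : Set A) =
        ⋂ g : G, {x : A | α g x = x} := by
      ext x
      simp only [Set.mem_iInter, Set.mem_setOf_eq]
      rfl
    rw [hset]
    exact isClosed_iInter fun g =>
      isClosed_eq (StarAlgEquiv.isometry (α g)).continuous continuous_id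
  set ι : ↥(fixedAlg α) →⋆ₙₐ[ℂ] A := NonUnitalStarSubalgebraClass.subtype (fixedAlg α) with hιdef
  have hι : Topology.IsClosedEmbedding ⇑ι := by
    refine ⟨Topology.IsEmbedding.subtypeVal, ?_⟩
    rw [show ⇑ι = (Subtype.val : ↥(fixedAlg α) → A) from rfl, Subtype.range_coe]
    exact hFclosed
  set ψ := matHom m ι with hψdef
  have hψ : Topology.IsClosedEmbedding ⇑ψ := isClosedEmbedding_mapMatrix hι
  -- apply `r`-comparison in `A`
  have hsub : CuntzSubeq (ψ a) (ψ b) := by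
    refine hrc m (ψ a) (ψ b) (starPos_map ψ ha) (starPos_map ψ hb) ?_
    intro τ σ da db hτ hτ1 hext hda hdb
    refine hcond (fun x => τ (ι x)) (fun X => σ (ψ X)) da db (hτ.comp ι hι) hτ1 ?_ ?_ ?_
    · obtain ⟨hq, hstd⟩ := hext
      refine ⟨hq.comp ψ hψ, fun y j => ?_⟩
      show σ (ψ (Matrix.single j j y)) = τ (ι y)
      rw [matHom_stdBasisMatrix, hstd]
    · exact hasDTau_comp ψ hda
    · exact hasDTau_comp ψ hdb
  exact cuntz_upgrade α hαmul hrok a b hsub
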